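/- Suppose the divergence generator d satisfies Assumptions 2, 3 and 4. Then the equation F(γ) = 0, where F(γ) = Σ_{i=1}^p d(s(γ, x̂_i), x̂_i) − ε, has a unique root on [0,∞), and this root is strictly positive. -/

import Mathlib

open Matrix Set Filter MeasureTheory
open scoped BigOperators Classical

noncomputable section

/-- The space of real `p × p` matrices. -/
abbrev Mat (p : ℕ) := Matrix (Fin p) (Fin p) ℝ

/-- Orthogonal matrix. -/
def IsOrthoMat {p : ℕ} (V : Mat p) : Prop := V * Vᵀ = 1

/-- The loss function `Tr(X²) − 2 Tr(Σ X)` of the estimation problem. -/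
def cseLoss {p : ℕ} (X S : Mat p) : ℝ := (X * X).trace - 2 * (S * X).trace

/-- Squared Frobenius norm. -/
def frobSq {p : ℕ} (X : Mat p) : ℝ := (Xᵀ * X).trace

/-- Feasibility for the uncertainty set `B_ε(Σ̂)`. -/
def Feas {p : ℕ} (D : Mat p → Mat p → EReal) (Sh : Mat p) (ε : ℝ) (S : Mat p) : Prop :=
  S.PosSemidef ∧ D S Sh ≤ (ε : EReal)

/-- The worst-case (primal) objective of the problem (CSE). -/
def primalVal {p : ℕ} (D : Mat p → Mat p → EReal) (Sh : Mat p) (ε : ℝ) (X : Mat p) : EReal :=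
  ⨆ S : {S : Mat p // Feas D Sh ε S}, (cseLoss X S.1 : EReal)

/-- The inner (dual) objective. -/
def dualVal {p : ℕ} (S : Mat p) : EReal :=
  ⨅ X : {X : Mat p // X.PosSemidef}, (cseLoss X.1 S : EReal)

/-- `X` solves the primal problem (CSE). -/
def IsCSESol {p : ℕ} (D : Mat p → Mat p → EReal) (Sh : Mat p) (ε : ℝ) (X : Mat p) : Prop :=
  X.PosSemidef ∧ ∀ Y : Mat p, Y.PosSemidef → primalVal D Sh ε X ≤ primalVal D Sh ε Y

/-- `S` solves the dual problem. -/
def IsDualSol {p : ℕ} (D : Mat p → Mat p → EReal) (Sh : Mat p) (ε : ℝ) (S : Mat p) : Prop :=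
  Feas D Sh ε S ∧ ∀ T : Mat p, Feas D Sh ε T → dualVal T ≤ dualVal S

/-- `S` solves the problem (P_Mat). -/
def IsPMatSol {p : ℕ} (D : Mat p → Mat p → EReal) (Sh : Mat p) (ε : ℝ) (S : Mat p) : Prop :=
  Feas D Sh ε S ∧ ∀ T : Mat p, Feas D Sh ε T → frobSq S ≤ frobSq T

/-- Assumption 1 (minimax): the optimal value of (CSE) equals the optimal value of the dual. -/
def MinimaxEq {p : ℕ} (D : Mat p → Mat p → EReal) (Sh : Mat p) (ε : ℝ) : Prop :=
  (⨅ X : {X : Mat p // X.PosSemidef}, primalVal D Sh ε X.1)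
    = ⨆ S : {S : Mat p // Feas D Sh ε S}, dualVal S.1

/-- `x` solves the problem (P_Vec). -/
def IsPVecSol {p : ℕ} (d : ℝ → ℝ → EReal) (xh : Fin p → ℝ) (ε : ℝ) (x : Fin p → ℝ) : Prop :=
  (∀ i, 0 ≤ x i) ∧ (∑ i, d (x i) (xh i)) ≤ (ε : EReal) ∧
  ∀ y : Fin p → ℝ, (∀ i, 0 ≤ y i) → (∑ i, d (y i) (xh i)) ≤ (ε : EReal) →
    ∑ i, (x i) ^ 2 ≤ ∑ i, (y i) ^ 2

/-- `D` is a divergence: nonnegative, and zero iff the arguments coincide (on its domain). -/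
def DivergenceBasic {p : ℕ} (D : Mat p → Mat p → EReal) : Prop :=
  (∀ X Y : Mat p, 0 ≤ D X Y) ∧
  (∀ X Y : Mat p, X.PosSemidef → Y.PosSemidef → D X Y ≠ ⊤ → (D X Y = 0 ↔ X = Y))

/-- Assumption 2 (spectral divergence) for `D` with generator `d`:
(a) orthogonal equivariance, (b) spectrality with continuous generator, (c) rearrangement. -/
def Assumption2 {p : ℕ} (D : Mat p → Mat p → EReal) (d : ℝ → ℝ → EReal) : Prop :=
  (∀ X Y : Mat p, X.PosSemidef → Y.PosSemidef → ∀ V : Mat p, IsOrthoMat V →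
      D X Y = D (V * X * Vᵀ) (V * Y * Vᵀ)) ∧
  (∀ x y : Fin p → ℝ, (∀ i, 0 ≤ x i) → (∀ i, 0 ≤ y i) →
      D (Matrix.diagonal x) (Matrix.diagonal y) = ∑ i, d (x i) (y i)) ∧
  (∀ b : ℝ, 0 < b → ContinuousOn (fun a => d a b) (Set.Ici 0)) ∧
  (∀ x y : Fin p → ℝ, Monotone x → Monotone y → (∀ i, 0 ≤ x i) → (∀ i, 0 ≤ y i) →
    ∀ V : Mat p, IsOrthoMat V →
      D (Matrix.diagonal x) (Matrix.diagonal y)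
        ≤ D (V * Matrix.diagonal x * Vᵀ) (Matrix.diagonal y) ∧
      (D (V * Matrix.diagonal x * Vᵀ) (Matrix.diagonal y) ≠ ⊤ →
        (D (V * Matrix.diagonal x * Vᵀ) (Matrix.diagonal y)
            = D (Matrix.diagonal x) (Matrix.diagonal y)
          ↔ V * Matrix.diagonal x * Vᵀ = Matrix.diagonal x)))

/-- The generator-level part of Assumption 2: `d` is a spectral divergence on `ℝ₊`. -/
def GenBasic (d : ℝ → ℝ → EReal) : Prop :=
  (∀ a b : ℝ, 0 ≤ a → 0 ≤ b → 0 ≤ d a b) ∧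
  (∀ a b : ℝ, 0 ≤ a → 0 ≤ b → d a b ≠ ⊤ → (d a b = 0 ↔ a = b)) ∧
  (∀ b : ℝ, 0 < b → ContinuousOn (fun a => d a b) (Set.Ici 0))

/-- Assumption 3 (regularity of input parameters). -/
def Assumption3 {p : ℕ} (d : ℝ → ℝ → EReal) (xh : Fin p → ℝ) (ε : ℝ) : Prop :=
  (∀ i, d (xh i) (xh i) ≠ ⊤) ∧ 0 < ε ∧ (ε : EReal) < ∑ i, d 0 (xh i)

/-- Assumption 4 (smoothness and convexity of the generator): for every `b > 0`,
`a ↦ d(a,b)` is finite and twice continuously differentiable on `(0,∞)` with partial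
derivatives `d₁, d₂`, and convex on `[0,b]` (as an extended-real-valued function). -/
def Assumption4 (d : ℝ → ℝ → EReal) (d₁ d₂ : ℝ → ℝ → ℝ) : Prop :=
  (∀ a b : ℝ, 0 < a → 0 < b → d a b ≠ ⊤) ∧
  (∀ a b : ℝ, 0 < a → 0 < b → HasDerivAt (fun t => (d t b).toReal) (d₁ a b) a) ∧
  (∀ a b : ℝ, 0 < a → 0 < b → HasDerivAt (fun t => d₁ t b) (d₂ a b) a) ∧
  (∀ b : ℝ, 0 < b → ContinuousOn (fun a => d₂ a b) (Set.Ioi 0)) ∧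
  (∀ b : ℝ, 0 < b → ∀ a₁ ∈ Set.Icc (0:ℝ) b, ∀ a₂ ∈ Set.Icc (0:ℝ) b, ∀ t ∈ Set.Icc (0:ℝ) 1,
      d (t * a₁ + (1 - t) * a₂) b ≤ (t : EReal) * d a₁ b + ((1 - t : ℝ) : EReal) * d a₂ b)

/-- Assumption 5 (differential inequality): `d` is twice continuously differentiable on
`(0,∞)²` (mixed partial `d₁b` of `d₁` in `b` exists and the second partials are continuous)
and satisfies `a·∂²d/∂a² + b·∂²d/∂a∂b ≥ ∂d/∂a` for `0 < a < b`. -/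
def Assumption5 (d₁ d₂ d₁b : ℝ → ℝ → ℝ) : Prop :=
  (∀ a b : ℝ, 0 < a → 0 < b → HasDerivAt (fun t => d₁ a t) (d₁b a b) b) ∧
  ContinuousOn (fun q : ℝ × ℝ => d₂ q.1 q.2) (Set.Ioi 0 ×ˢ Set.Ioi 0) ∧
  ContinuousOn (fun q : ℝ × ℝ => d₁b q.1 q.2) (Set.Ioi 0 ×ˢ Set.Ioi 0) ∧
  (∀ a b : ℝ, 0 < a → a < b → d₁ a b ≤ a * d₂ a b + b * d₁b a b)

/-- The eigenvalue map `s`: for `γ, b > 0`, `s(γ,b)` is the unique `a ≥ 0` with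
`2a + γ·∂d/∂a(a,b) = 0`; and `s(γ,b) = 0` if `γ = 0` or `b = 0`. -/
def EigenMapSpec (d₁ s : ℝ → ℝ → ℝ) : Prop :=
  (∀ γ b : ℝ, γ = 0 ∨ b = 0 → s γ b = 0) ∧
  (∀ γ b : ℝ, 0 < γ → 0 < b →
    0 ≤ s γ b ∧ 2 * s γ b + γ * d₁ (s γ b) b = 0 ∧
    ∀ a : ℝ, 0 ≤ a → 2 * a + γ * d₁ a b = 0 → a = s γ b)

namespace Stmt13

open Topology

variable {d : ℝ → ℝ → EReal} {d₁ d₂ s : ℝ → ℝ → ℝ}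

lemma d_ne_bot (hgen : GenBasic d) {a b : ℝ} (ha : 0 ≤ a) (hb : 0 ≤ b) : d a b ≠ ⊥ :=
  fun h => absurd (h ▸ hgen.1 a b ha hb) (not_le.mpr EReal.bot_lt_zero)

lemma toReal_coe_d (hgen : GenBasic d) (hA4 : Assumption4 d d₁ d₂) {a b : ℝ}
    (ha : 0 < a) (hb : 0 < b) : ((d a b).toReal : EReal) = d a b :=
  EReal.coe_toReal (hA4.1 a b ha hb) (d_ne_bot hgen ha.le hb.le)

lemma toReal_d_nonneg (hgen : GenBasic d) {a b : ℝ} (ha : 0 ≤ a) (hb : 0 ≤ b) :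
    0 ≤ (d a b).toReal := by
  by_cases htop : d a b = ⊤
  · simp [htop]
  · have h := EReal.coe_toReal htop (d_ne_bot hgen ha hb)
    have h0 : ((0 : ℝ) : EReal) ≤ ((d a b).toReal : EReal) := by
      rw [h, EReal.coe_zero]; exact hgen.1 a b ha hb
    exact EReal.coe_le_coe_iff.mp h0

lemma d_self (hgen : GenBasic d) (hA4 : Assumption4 d d₁ d₂) {b : ℝ} (hb : 0 < b) :
    d b b = 0 :=
  (hgen.2.1 b b hb.le hb.le (hA4.1 b b hb hb)).mpr rfl

lemma toReal_d_pos (hgen : GenBasic d) (hA4 : Assumption4 d d₁ d₂) {a b : ℝ}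
    (ha : 0 < a) (hab : a < b) : 0 < (d a b).toReal := by
  have hb : 0 < b := ha.trans hab
  have hne : d a b ≠ 0 := fun h =>
    hab.ne ((hgen.2.1 a b ha.le hb.le (hA4.1 a b ha hb)).mp h)
  have h0 : (0 : EReal) < d a b := (hgen.1 a b ha.le hb.le).lt_of_ne (Ne.symm hne)
  have h1 : ((0 : ℝ) : EReal) < ((d a b).toReal : EReal) := by
    rw [toReal_coe_d hgen hA4 ha hb, EReal.coe_zero]; exact h0
  exact EReal.coe_lt_coe_iff.mp h1

lemma convexOn_f (hgen : GenBasic d) (hA4 : Assumption4 d d₁ d₂) {b : ℝ} (hb : 0 < b) :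
    ConvexOn ℝ (Ioc 0 b) (fun a => (d a b).toReal) := by
  refine ⟨convex_Ioc 0 b, ?_⟩
  rintro x ⟨hx0, hxb⟩ y ⟨hy0, hyb⟩ t u ht hu htu
  have hu' : u = 1 - t := by linarith
  subst hu'
  have hcomb_pos : 0 < t * x + (1 - t) * y := by
    rcases eq_or_lt_of_le ht with h | h
    · rw [← h]; simpa using hy0
    · have h1 : 0 < t * x := mul_pos h hx0
      nlinarith [mul_nonneg hu hy0.le]
  have key := hA4.2.2.2.2 b hb x ⟨hx0.le, hxb⟩ y ⟨hy0.le, hyb⟩ t ⟨ht, by linarith⟩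
  rw [← toReal_coe_d hgen hA4 hx0 hb, ← toReal_coe_d hgen hA4 hy0 hb,
    ← toReal_coe_d hgen hA4 hcomb_pos hb, ← EReal.coe_mul, ← EReal.coe_mul,
    ← EReal.coe_add] at key
  simpa [smul_eq_mul] using EReal.coe_le_coe_iff.mp key

lemma d₁_self (hgen : GenBasic d) (hA4 : Assumption4 d d₁ d₂) {b : ℝ} (hb : 0 < b) :
    d₁ b b = 0 := by
  have hfb : (d b b).toReal = 0 := by rw [d_self hgen hA4 hb, EReal.toReal_zero]
  have hmin : IsLocalMin (fun a => (d a b).toReal) b := by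
    filter_upwards [Ioi_mem_nhds hb] with a ha
    rw [hfb]
    exact toReal_d_nonneg hgen (le_of_lt ha) hb.le
  exact hmin.hasDerivAt_eq_zero (hA4.2.1 b b hb hb)

lemma d₁_mono (hgen : GenBasic d) (hA4 : Assumption4 d d₁ d₂) {b : ℝ} (hb : 0 < b) :
    MonotoneOn (fun a => d₁ a b) (Ioc 0 b) := by
  intro x hx y hy hxy
  rcases eq_or_lt_of_le hxy with rfl | h
  · exact le_rfl
  calc d₁ x b ≤ slope (fun a => (d a b).toReal) x y :=
        (convexOn_f hgen hA4 hb).le_slope_of_hasDerivAt hx hy h (hA4.2.1 x b hx.1 hb)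
    _ ≤ d₁ y b :=
        (convexOn_f hgen hA4 hb).slope_le_of_hasDerivAt hx hy h (hA4.2.1 y b hy.1 hb)

lemma d₁_neg (hgen : GenBasic d) (hA4 : Assumption4 d d₁ d₂) {a b : ℝ}
    (ha : a ∈ Ioo 0 b) : d₁ a b < 0 := by
  have hb : 0 < b := ha.1.trans ha.2
  have hle := (convexOn_f hgen hA4 hb).le_slope_of_hasDerivAt
    ⟨ha.1, ha.2.le⟩ ⟨hb, le_refl b⟩ ha.2 (hA4.2.1 a b ha.1 hb)
  have hfb : (d b b).toReal = 0 := by rw [d_self hgen hA4 hb, EReal.toReal_zero]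
  have hfa : 0 < (d a b).toReal := toReal_d_pos hgen hA4 ha.1 ha.2
  have hslope : slope (fun t => (d t b).toReal) a b < 0 := by
    rw [slope_def_field, hfb]
    apply div_neg_of_neg_of_pos <;> linarith [ha.2]
  exact hle.trans_lt hslope

lemma s_nonneg (hs : EigenMapSpec d₁ s) {γ b : ℝ} (hγ : 0 ≤ γ) (hb : 0 ≤ b) :
    0 ≤ s γ b := by
  rcases eq_or_lt_of_le hγ with rfl | hγ'
  · rw [hs.1 0 b (Or.inl rfl)]
  rcases eq_or_lt_of_le hb with rfl | hb'
  · rw [hs.1 γ 0 (Or.inr rfl)]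
  exact (hs.2 γ b hγ' hb').1

lemma s_mem (hgen : GenBasic d) (hA4 : Assumption4 d d₁ d₂) (hs : EigenMapSpec d₁ s)
    {γ b : ℝ} (hγ : 0 < γ) (hb : 0 < b) : s γ b ∈ Ioo 0 b := by
  obtain ⟨hs0, hseq, huniq⟩ := hs.2 γ b hγ hb
  have hc : b / 2 ∈ Ioo (0:ℝ) b := ⟨by positivity, by linarith⟩
  have hδ : 0 < -d₁ (b/2) b := neg_pos.mpr (d₁_neg hgen hA4 hc)
  set δ := -d₁ (b/2) b with hδdef
  set a0 := min (b/2) (γ * δ / 4) with ha0def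
  have ha0pos : 0 < a0 := lt_min hc.1 (by positivity)
  have ha0c : a0 ≤ b/2 := min_le_left _ _
  have ha0b : a0 ≤ b := ha0c.trans hc.2.le
  have hga0 : 2 * a0 + γ * d₁ a0 b < 0 := by
    have h1 : d₁ a0 b ≤ d₁ (b/2) b :=
      d₁_mono hgen hA4 hb ⟨ha0pos, ha0b⟩ ⟨hc.1, hc.2.le⟩ ha0c
    have h2 : 2 * a0 ≤ γ * δ / 2 := by
      have := min_le_right (b/2) (γ * δ / 4); linarith
    have h3 : γ * d₁ a0 b ≤ γ * (-δ) := by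
      apply mul_le_mul_of_nonneg_left _ hγ.le
      rw [hδdef]; linarith
    nlinarith
  have hcont : ContinuousOn (fun a => 2 * a + γ * d₁ a b) (Icc a0 b) := by
    intro x hx
    have hx0 : 0 < x := lt_of_lt_of_le ha0pos hx.1
    have hd₁c : ContinuousAt (fun t => d₁ t b) x := (hA4.2.2.1 x b hx0 hb).continuousAt
    exact (((continuous_const.mul continuous_id).continuousAt).add
      (hd₁c.const_mul γ)).continuousWithinAt
  have hgb : (0:ℝ) < 2 * b + γ * d₁ b b := by
    rw [d₁_self hgen hA4 hb, mul_zero, add_zero]; linarith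
  obtain ⟨x, hxmem, hxeq⟩ := intermediate_value_Icc ha0b hcont ⟨hga0.le, hgb.le⟩
  have hxeq' : 2 * x + γ * d₁ x b = 0 := hxeq
  have hxb : x ≠ b := by intro h; rw [h] at hxeq'; linarith
  have hx0 : 0 < x := lt_of_lt_of_le ha0pos hxmem.1
  have hxs := huniq x hx0.le hxeq'
  rw [← hxs]
  exact ⟨hx0, lt_of_le_of_ne hxmem.2 hxb⟩

lemma s_attain (hgen : GenBasic d) (hA4 : Assumption4 d d₁ d₂) (hs : EigenMapSpec d₁ s)
    {a b : ℝ} (ha : a ∈ Ioo 0 b) : ∃ γ : ℝ, 0 < γ ∧ s γ b = a := by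
  have hb : 0 < b := ha.1.trans ha.2
  have hd := d₁_neg hgen hA4 ha
  have hdpos : 0 < -d₁ a b := neg_pos.mpr hd
  have hγpos : 0 < 2 * a / (-d₁ a b) := div_pos (by linarith [ha.1]) hdpos
  obtain ⟨_, _, huniq⟩ := hs.2 _ b hγpos hb
  refine ⟨2 * a / (-d₁ a b), hγpos, ?_⟩
  refine (huniq a ha.1.le ?_).symm
  have hne : d₁ a b ≠ 0 := hd.ne
  field_simp
  ring

lemma s_strictMono (hgen : GenBasic d) (hA4 : Assumption4 d d₁ d₂) (hs : EigenMapSpec d₁ s)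
    {b : ℝ} (hb : 0 < b) : StrictMonoOn (fun γ => s γ b) (Ioi 0) := by
  intro γ1 h1 γ2 h2 h12
  have h1 : (0:ℝ) < γ1 := h1
  have h2 : (0:ℝ) < γ2 := h2
  by_contra hle
  push_neg at hle
  obtain ⟨m1, e1, _⟩ := hs.2 γ1 b h1 hb
  obtain ⟨m2, e2, _⟩ := hs.2 γ2 b h2 hb
  have hm1 := s_mem hgen hA4 hs h1 hb
  have hm2 := s_mem hgen hA4 hs h2 hb
  have hmono : d₁ (s γ2 b) b ≤ d₁ (s γ1 b) b :=
    d₁_mono hgen hA4 hb ⟨hm2.1, hm2.2.le⟩ ⟨hm1.1, hm1.2.le⟩ hle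
  have key : γ1 * γ2 * d₁ (s γ2 b) b ≤ γ1 * γ2 * d₁ (s γ1 b) b :=
    mul_le_mul_of_nonneg_left hmono (by positivity)
  have k1 : γ1 * d₁ (s γ1 b) b = -(2 * s γ1 b) := by linarith
  have k2 : γ2 * d₁ (s γ2 b) b = -(2 * s γ2 b) := by linarith
  have key2 : γ1 * (-(2 * s γ2 b)) ≤ γ2 * (-(2 * s γ1 b)) := by
    calc γ1 * (-(2 * s γ2 b)) = γ1 * γ2 * d₁ (s γ2 b) b := by rw [← k2]; ring
    _ ≤ γ1 * γ2 * d₁ (s γ1 b) b := key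
    _ = γ2 * (-(2 * s γ1 b)) := by rw [← k1]; ring
  nlinarith [hm1.1, hm2.1, mul_lt_mul_of_pos_left h12 hm2.1]

lemma f_anti (hgen : GenBasic d) (hA4 : Assumption4 d d₁ d₂) {u v b : ℝ}
    (hu : 0 < u) (huv : u < v) (hvb : v < b) :
    (d v b).toReal < (d u b).toReal := by
  have hb : 0 < b := hu.trans (huv.trans hvb)
  have hbu : 0 < b - u := by linarith
  set t := (b - v) / (b - u) with htdef
  have ht0 : 0 < t := div_pos (by linarith) hbu
  have ht1 : t < 1 := (div_lt_one hbu).mpr (by linarith)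
  have hcomb : t * u + (1 - t) * b = v := by
    rw [htdef]
    field_simp
    ring
  have key := hA4.2.2.2.2 b hb u ⟨hu.le, by linarith⟩ b ⟨hb.le, le_refl b⟩ t ⟨ht0.le, ht1.le⟩
  rw [hcomb, d_self hgen hA4 hb, mul_zero, add_zero,
    ← toReal_coe_d hgen hA4 hu hb, ← toReal_coe_d hgen hA4 (hu.trans huv) hb,
    ← EReal.coe_mul] at key
  have hle := EReal.coe_le_coe_iff.mp key
  have hfu : 0 < (d u b).toReal := toReal_d_pos hgen hA4 hu (huv.trans hvb)
  nlinarith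

lemma s_continuousAt (hgen : GenBasic d) (hA4 : Assumption4 d d₁ d₂) (hs : EigenMapSpec d₁ s)
    {γ0 b : ℝ} (hγ0 : 0 < γ0) (hb : 0 < b) : ContinuousAt (fun γ => s γ b) γ0 := by
  have hmono := (s_strictMono hgen hA4 hs hb (d := d)).monotoneOn
  rw [ContinuousAt]
  apply tendsto_order.2
  constructor
  · intro c hc
    rcases le_or_gt c 0 with h | h
    · filter_upwards [Ioi_mem_nhds hγ0] with γ hγ
      exact h.trans_lt (s_mem hgen hA4 hs hγ hb).1
    · obtain ⟨a, hca, has⟩ := exists_between hc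
      have haIoo : a ∈ Ioo 0 b := ⟨h.trans hca, has.trans (s_mem hgen hA4 hs hγ0 hb).2⟩
      obtain ⟨γa, hγa, hsa⟩ := s_attain hgen hA4 hs haIoo
      have hγaγ0 : γa < γ0 := by
        by_contra hcon
        push_neg at hcon
        have hle2 : s γ0 b ≤ s γa b := hmono (mem_Ioi.mpr hγ0) (mem_Ioi.mpr hγa) hcon
        rw [hsa] at hle2
        linarith [has]
      filter_upwards [Ioi_mem_nhds hγaγ0] with γ hγ
      have h2 : s γa b ≤ s γ b := hmono (mem_Ioi.mpr hγa) (mem_Ioi.mpr (hγa.trans hγ)) (le_of_lt hγ)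
      rw [hsa] at h2
      exact hca.trans_le h2
  · intro c hc
    rcases le_or_gt b c with h | h
    · filter_upwards [Ioi_mem_nhds hγ0] with γ hγ
      exact (s_mem hgen hA4 hs hγ hb).2.trans_le h
    · obtain ⟨a, hsa', hac⟩ := exists_between hc
      have haIoo : a ∈ Ioo 0 b := ⟨(s_mem hgen hA4 hs hγ0 hb).1.trans hsa', hac.trans h⟩
      obtain ⟨γa, hγapos, hsa⟩ := s_attain hgen hA4 hs haIoo
      have hγ0γa : γ0 < γa := by
        by_contra hcon
        push_neg at hcon
        have hle2 : s γa b ≤ s γ0 b := hmono (mem_Ioi.mpr hγapos) (mem_Ioi.mpr hγ0) hcon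
        rw [hsa] at hle2
        linarith [hsa']
      filter_upwards [Ioo_mem_nhds hγ0 hγ0γa] with γ hγ
      have h2 : s γ b ≤ s γa b := hmono (mem_Ioi.mpr hγ.1) (mem_Ioi.mpr hγapos) hγ.2.le
      rw [hsa] at h2
      exact h2.trans_lt hac

lemma s_tendsto_top (hgen : GenBasic d) (hA4 : Assumption4 d d₁ d₂) (hs : EigenMapSpec d₁ s)
    {b : ℝ} (hb : 0 < b) : Tendsto (fun γ => s γ b) atTop (𝓝 b) := by
  have hmono := (s_strictMono hgen hA4 hs hb (d := d)).monotoneOn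
  apply tendsto_order.2
  constructor
  · intro c hc
    rcases le_or_gt c 0 with h | h
    · filter_upwards [Ioi_mem_atTop 0] with γ hγ
      exact h.trans_lt (s_mem hgen hA4 hs hγ hb).1
    · obtain ⟨a, hca, hab⟩ := exists_between hc
      have haIoo : a ∈ Ioo 0 b := ⟨h.trans hca, hab⟩
      obtain ⟨γa, hγa, hsa⟩ := s_attain hgen hA4 hs haIoo
      filter_upwards [Ioi_mem_atTop γa] with γ hγ
      have h2 : s γa b ≤ s γ b := hmono (mem_Ioi.mpr hγa) (mem_Ioi.mpr (hγa.trans hγ)) (le_of_lt hγ)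
      rw [hsa] at h2
      exact hca.trans_le h2
  · intro c hc
    filter_upwards [Ioi_mem_atTop 0] with γ hγ
    exact (s_mem hgen hA4 hs hγ hb).2.trans hc

lemma s_tendsto_zero (hgen : GenBasic d) (hA4 : Assumption4 d d₁ d₂) (hs : EigenMapSpec d₁ s)
    {b : ℝ} (hb : 0 < b) : Tendsto (fun γ => s γ b) (𝓝[>] 0) (𝓝 0) := by
  have hmono := (s_strictMono hgen hA4 hs hb (d := d)).monotoneOn
  apply tendsto_order.2
  constructor
  · intro c hc
    filter_upwards [self_mem_nhdsWithin] with γ hγ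
    exact hc.trans (s_mem hgen hA4 hs hγ hb).1
  · intro c hc
    have hmin : 0 < min c b := lt_min hc hb
    have haIoo : min c b / 2 ∈ Ioo (0:ℝ) b := by
      constructor
      · positivity
      · have := min_le_right c b; linarith
    have hac : min c b / 2 < c := by
      have := min_le_left c b; linarith
    obtain ⟨γa, hγapos, hsa⟩ := s_attain hgen hA4 hs haIoo
    filter_upwards [Ioo_mem_nhdsGT_of_mem (⟨le_refl 0, hγapos⟩ : (0:ℝ) ∈ Ico 0 γa)] with γ hγ
    have h2 : s γ b ≤ s γa b := hmono (mem_Ioi.mpr hγ.1) (mem_Ioi.mpr hγapos) hγ.2.le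
    rw [hsa] at h2
    exact h2.trans_lt hac

lemma d_term_tendsto_zero (hgen : GenBasic d) (hA4 : Assumption4 d d₁ d₂)
    (hs : EigenMapSpec d₁ s) {b : ℝ} (hb : 0 < b) :
    Tendsto (fun γ => d (s γ b) b) (𝓝[>] 0) (𝓝 (d 0 b)) := by
  have hc : ContinuousWithinAt (fun a => d a b) (Ici 0) 0 :=
    (hgen.2.2 b hb) 0 (by simp)
  apply hc.tendsto.comp
  rw [tendsto_nhdsWithin_iff]
  refine ⟨s_tendsto_zero hgen hA4 hs hb, ?_⟩
  filter_upwards [self_mem_nhdsWithin] with γ hγ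
  exact mem_Ici.mpr (s_nonneg hs (le_of_lt hγ) hb.le)

lemma coe_sum_eq {p : ℕ} (g : Fin p → ℝ) :
    ((∑ i, g i : ℝ) : EReal) = ∑ i, (g i : EReal) := by
  induction (Finset.univ : Finset (Fin p)) using Finset.cons_induction with
  | empty => simp
  | cons a s ha ih => rw [Finset.sum_cons, Finset.sum_cons, ← ih, EReal.coe_add]

end Stmt13

open Topology

/-- Lemma: unique root of `F`.
Under Assumptions 2, 3 and 4 for the generator, the equation
`F(γ) = Σᵢ d(s(γ,x̂ᵢ),x̂ᵢ) − ε = 0` has a unique root on `[0,∞)`, and this root is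
strictly positive. -/
theorem stmt_13 {p : ℕ}
    (d : ℝ → ℝ → EReal) (d₁ d₂ s : ℝ → ℝ → ℝ)
    (xh : Fin p → ℝ) (ε : ℝ)
    (hmono : Monotone xh) (hnn : ∀ i, 0 ≤ xh i)
    (hgen : GenBasic d)
    (hA3 : Assumption3 d xh ε)
    (hA4 : Assumption4 d d₁ d₂)
    (hs : EigenMapSpec d₁ s) :
    (∃! γ : ℝ, 0 ≤ γ ∧ (∑ i, d (s γ (xh i)) (xh i)) = (ε : EReal)) ∧
    (∀ γ : ℝ, 0 ≤ γ → (∑ i, d (s γ (xh i)) (xh i)) = (ε : EReal) → 0 < γ) := by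
  classical
  obtain ⟨hA3fin, hε, hεlt⟩ := hA3
  have hd00 : ∀ i, xh i = 0 → d 0 (xh i) = 0 := by
    intro i h0
    have hfin : d 0 0 ≠ ⊤ := by rw [show (0:ℝ) = xh i from h0.symm]; exact hA3fin i
    rw [h0]
    exact (hgen.2.1 0 0 le_rfl le_rfl hfin).mpr rfl
  -- existence of a strictly positive eigenvalue
  have hexj : ∃ j, 0 < xh j := by
    by_contra hall
    push_neg at hall
    have hz : ∀ i, d 0 (xh i) = 0 := fun i => hd00 i (le_antisymm (hall i) (hnn i))
    rw [Finset.sum_congr rfl (fun i _ => hz i)] at hεlt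
    simp only [Finset.sum_const_zero] at hεlt
    have : ε < 0 := by exact_mod_cast hεlt
    linarith
  -- the sum equals the coercion of its real version, for γ > 0
  have sum_coe : ∀ γ : ℝ, 0 < γ →
      (∑ i, d (s γ (xh i)) (xh i)) = ((∑ i, (d (s γ (xh i)) (xh i)).toReal : ℝ) : EReal) := by
    intro γ hγ
    rw [Stmt13.coe_sum_eq]
    refine Finset.sum_congr rfl fun i _ => ?_
    rcases (hnn i).eq_or_lt with h0 | hpos
    · have hz : d 0 0 = 0 := by
        have hfin : d 0 0 ≠ ⊤ := by rw [show (0:ℝ) = xh i from h0]; exact hA3fin i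
        exact (hgen.2.1 0 0 le_rfl le_rfl hfin).mpr rfl
      rw [← h0, hs.1 γ 0 (Or.inr rfl), hz]
      simp
    · exact (Stmt13.toReal_coe_d hgen hA4 (Stmt13.s_mem hgen hA4 hs hγ hpos).1 hpos).symm
  -- value at γ = 0
  have hsum0 : (∑ i, d (s 0 (xh i)) (xh i)) = ∑ i, d 0 (xh i) :=
    Finset.sum_congr rfl fun i _ => by rw [hs.1 0 (xh i) (Or.inl rfl)]
  -- any root is positive
  have posOfRoot : ∀ γ : ℝ, 0 ≤ γ → (∑ i, d (s γ (xh i)) (xh i)) = (ε : EReal) → 0 < γ := by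
    intro γ hγ0 hroot
    rcases hγ0.eq_or_lt with h | h
    · exfalso
      rw [← h, hsum0] at hroot
      rw [hroot] at hεlt
      exact lt_irrefl _ hεlt
    · exact h
  -- continuity of G on the positive axis
  have hGcont : ∀ γ0 : ℝ, 0 < γ0 →
      ContinuousAt (fun γ => ∑ i, (d (s γ (xh i)) (xh i)).toReal) γ0 := by
    intro γ0 hγ0
    have : Tendsto (fun γ => ∑ i, (d (s γ (xh i)) (xh i)).toReal) (𝓝 γ0)
        (𝓝 (∑ i, (d (s γ0 (xh i)) (xh i)).toReal)) := by
      apply tendsto_finset_sum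
      intro i _
      rcases (hnn i).eq_or_lt with h0 | hpos
      · have hconst : ∀ γ, (d (s γ (xh i)) (xh i)).toReal = (d (s γ0 (xh i)) (xh i)).toReal := by
          intro γ
          rw [← h0, hs.1 γ 0 (Or.inr rfl), hs.1 γ0 0 (Or.inr rfl)]
        simp only [hconst]
        exact tendsto_const_nhds
      · have hf : ContinuousAt (fun a => (d a (xh i)).toReal) (s γ0 (xh i)) :=
          (hA4.2.1 _ (xh i) (Stmt13.s_mem hgen hA4 hs hγ0 hpos).1 hpos).continuousAt
        have hcomp := hf.tendsto.comp
          ((Stmt13.s_continuousAt hgen hA4 hs hγ0 hpos : _))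
        simpa [Function.comp_def] using hcomp
    exact this
  -- G tends to 0 at infinity
  have hGtop : Tendsto (fun γ => ∑ i, (d (s γ (xh i)) (xh i)).toReal) atTop (𝓝 0) := by
    have : Tendsto (fun γ => ∑ i, (d (s γ (xh i)) (xh i)).toReal) atTop
        (𝓝 (∑ _i : Fin p, (0:ℝ))) := by
      apply tendsto_finset_sum
      intro i _
      rcases (hnn i).eq_or_lt with h0 | hpos
      · have hz : d 0 0 = 0 := by
          have hfin : d 0 0 ≠ ⊤ := by rw [show (0:ℝ) = xh i from h0]; exact hA3fin i
          exact (hgen.2.1 0 0 le_rfl le_rfl hfin).mpr rfl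
        have hconst : ∀ γ : ℝ, (d (s γ (xh i)) (xh i)).toReal = 0 := by
          intro γ
          rw [← h0, hs.1 γ 0 (Or.inr rfl), hz, EReal.toReal_zero]
        simp only [hconst]
        exact tendsto_const_nhds
      · have hf : ContinuousAt (fun a => (d a (xh i)).toReal) (xh i) :=
          (hA4.2.1 (xh i) (xh i) hpos hpos).continuousAt
        have hcomp := hf.tendsto.comp (Stmt13.s_tendsto_top hgen hA4 hs hpos)
        rw [Stmt13.d_self hgen hA4 hpos, EReal.toReal_zero] at hcomp
        simpa [Function.comp_def] using hcomp
    simpa using this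
  -- there is a small γ₁ where G exceeds ε
  have hγ1ex : ∃ γ1 : ℝ, 0 < γ1 ∧ ε < ∑ i, (d (s γ1 (xh i)) (xh i)).toReal := by
    by_cases hcase : ∀ i, d 0 (xh i) ≠ ⊤
    · have hsumlt : ε < ∑ i, (d 0 (xh i)).toReal := by
        have hcoe : (∑ i, d 0 (xh i)) = ((∑ i, (d 0 (xh i)).toReal : ℝ) : EReal) := by
          rw [Stmt13.coe_sum_eq]
          exact Finset.sum_congr rfl fun i _ =>
            (EReal.coe_toReal (hcase i) (Stmt13.d_ne_bot hgen le_rfl (hnn i))).symm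
        rw [hcoe] at hεlt
        exact_mod_cast hεlt
      have htend : Tendsto (fun γ => ∑ i, (d (s γ (xh i)) (xh i)).toReal) (𝓝[>] (0:ℝ))
          (𝓝 (∑ i, (d 0 (xh i)).toReal)) := by
        apply tendsto_finset_sum
        intro i _
        rcases (hnn i).eq_or_lt with h0 | hpos
        · have hconst : ∀ γ : ℝ, (d (s γ (xh i)) (xh i)).toReal = (d 0 (xh i)).toReal := by
            intro γ
            rw [← h0, hs.1 γ 0 (Or.inr rfl)]
          simp only [hconst]
          exact tendsto_const_nhds
        · have hcomp := (EReal.tendsto_toReal (hcase i)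
            (Stmt13.d_ne_bot hgen le_rfl (hnn i))).comp
            (Stmt13.d_term_tendsto_zero hgen hA4 hs hpos)
          simpa [Function.comp_def] using hcomp
      have hev := htend.eventually (lt_mem_nhds hsumlt)
      obtain ⟨γ1, hγ1gt, hγ1mem⟩ := (hev.and self_mem_nhdsWithin).exists
      exact ⟨γ1, hγ1mem, hγ1gt⟩
    · push_neg at hcase
      obtain ⟨j, hj⟩ := hcase
      have hjpos : 0 < xh j := by
        rcases (hnn j).eq_or_lt with h0 | hpos
        · exfalso
          have hz := hd00 j h0.symm
          rw [hz] at hj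
          exact absurd hj (by simp)
        · exact hpos
      have htop : Tendsto (fun γ => d (s γ (xh j)) (xh j)) (𝓝[>] (0:ℝ)) (𝓝 (⊤ : EReal)) := by
        have := Stmt13.d_term_tendsto_zero hgen hA4 hs hjpos
        rwa [hj] at this
      have hev := htop.eventually (lt_mem_nhds (show (ε : EReal) < ⊤ from EReal.coe_lt_top ε))
      obtain ⟨γ1, hγ1gt, hγ1mem⟩ := (hev.and self_mem_nhdsWithin).exists
      refine ⟨γ1, hγ1mem, ?_⟩
      have hle : d (s γ1 (xh j)) (xh j) ≤ ∑ i, d (s γ1 (xh i)) (xh i) :=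
        Finset.single_le_sum (f := fun i => d (s γ1 (xh i)) (xh i))
          (fun i _ => hgen.1 _ _ (Stmt13.s_nonneg hs (le_of_lt hγ1mem) (hnn i)) (hnn i))
          (Finset.mem_univ j)
      have hlt := lt_of_lt_of_le hγ1gt hle
      rw [sum_coe γ1 hγ1mem] at hlt
      exact_mod_cast hlt
  obtain ⟨γ1, hγ1pos, hγ1gt⟩ := hγ1ex
  -- find γ₂ > γ₁ with G γ₂ < ε
  obtain ⟨γ2, hγ2lt, hγ2gt⟩ := ((hGtop.eventually (gt_mem_nhds hε)).and
    (eventually_gt_atTop γ1)).exists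
  -- IVT gives a root
  have hcontIcc : ContinuousOn (fun γ => ∑ i, (d (s γ (xh i)) (xh i)).toReal) (Icc γ1 γ2) :=
    fun γ hγ => (hGcont γ (lt_of_lt_of_le hγ1pos hγ.1)).continuousWithinAt
  obtain ⟨γstar, hγstarmem, hγstareq⟩ :=
    intermediate_value_Icc' hγ2gt.le hcontIcc ⟨hγ2lt.le, hγ1gt.le⟩
  have hγstarpos : 0 < γstar := lt_of_lt_of_le hγ1pos hγstarmem.1
  have hGstar : (∑ i, (d (s γstar (xh i)) (xh i)).toReal) = ε := hγstareq
  -- strict antitonicity of G on the positive axis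
  have hanti : ∀ γ γ' : ℝ, 0 < γ → γ < γ' →
      (∑ i, (d (s γ' (xh i)) (xh i)).toReal) < ∑ i, (d (s γ (xh i)) (xh i)).toReal := by
    intro γ γ' hγ hγγ'
    obtain ⟨j, hj⟩ := hexj
    have hγ' : 0 < γ' := hγ.trans hγγ'
    have hterm : ∀ b : ℝ, 0 < b →
        (d (s γ' b) b).toReal < (d (s γ b) b).toReal := by
      intro b hb
      have hlt : s γ b < s γ' b :=
        Stmt13.s_strictMono hgen hA4 hs hb (mem_Ioi.mpr hγ) (mem_Ioi.mpr hγ') hγγ'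
      exact Stmt13.f_anti hgen hA4 (Stmt13.s_mem hgen hA4 hs hγ hb).1 hlt
        (Stmt13.s_mem hgen hA4 hs hγ' hb).2
    apply Finset.sum_lt_sum
    · intro i _
      rcases (hnn i).eq_or_lt with h0 | hpos
      · rw [← h0, hs.1 γ 0 (Or.inr rfl), hs.1 γ' 0 (Or.inr rfl)]
      · exact (hterm (xh i) hpos).le
    · exact ⟨j, Finset.mem_univ j, hterm (xh j) hj⟩
  refine ⟨⟨γstar, ⟨hγstarpos.le, ?_⟩, ?_⟩, posOfRoot⟩
  · rw [sum_coe γstar hγstarpos, hGstar]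
  · rintro γ' ⟨hγ'0, hγ'root⟩
    have hγ'pos : 0 < γ' := posOfRoot γ' hγ'0 hγ'root
    have hG' : (∑ i, (d (s γ' (xh i)) (xh i)).toReal) = ε := by
      rw [sum_coe γ' hγ'pos] at hγ'root
      exact_mod_cast hγ'root
    by_contra hne
    rcases lt_or_gt_of_ne hne with h | h
    · have := hanti γ' γstar hγ'pos h
      rw [hG', hGstar] at this
      exact lt_irrefl _ this
    · have := hanti γstar γ' hγstarpos h
      rw [hG', hGstar] at this
      exact lt_irrefl _ this
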